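/- Let A_• be an inverse sequence of abelian groups ⋯ → A_2 → A_1 → A_0 where each structure map A_n → A_{n-1} is surjective but not injective. Let B_n = ⊕_{k∈ℕ} A_n (countably infinite direct sum), with induced maps B_n → B_{n-1}. Then the natural map ⊕_{k∈ℕ} (lim_n A_n) → lim_n (⊕_{k∈ℕ} A_n) is not surjective. -/
import Mathlib

noncomputable def chain {A : ℕ → Type*} [∀ n, AddCommGroup (A n)]
    (g : ∀ n, A n → A (n + 1)) (k : ℕ) (a : A (k + 1)) : ∀ n, A n
  | 0 => 0
  | (n + 1) => if h2 : n = k then h2 ▸ a else if n + 1 ≤ k then 0 else g n (chain g k a n)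

lemma chain_le {A : ℕ → Type*} [∀ n, AddCommGroup (A n)]
    (g : ∀ n, A n → A (n + 1)) (k : ℕ) (a : A (k + 1)) :
    ∀ n, n ≤ k → chain g k a n = 0
  | 0, _ => rfl
  | (n + 1), h => by
      rw [chain, dif_neg (by omega), if_pos h]

lemma chain_succ_self {A : ℕ → Type*} [∀ n, AddCommGroup (A n)]
    (g : ∀ n, A n → A (n + 1)) (k : ℕ) (a : A (k + 1)) :
    chain g k a (k + 1) = a := by
  rw [chain, dif_pos rfl]

lemma chain_gt {A : ℕ → Type*} [∀ n, AddCommGroup (A n)]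
    (g : ∀ n, A n → A (n + 1)) (k : ℕ) (a : A (k + 1)) (n : ℕ) (h : k < n) :
    chain g k a (n + 1) = g n (chain g k a n) := by
  rw [chain, dif_neg (by omega), if_neg (by omega)]

/-- For an inverse sequence of abelian groups with surjective,
non-injective structure maps, the natural map
`⊕_{k∈ℕ} (lim_n A_n) → lim_n (⊕_{k∈ℕ} A_n)` is not surjective. -/
theorem stmt0 (A : ℕ → Type*) [∀ n, AddCommGroup (A n)]
    (f : ∀ n, A (n + 1) →+ A n)
    (hsurj : ∀ n, Function.Surjective (f n))
    (hninj : ∀ n, ¬ Function.Injective (f n)) :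
    ∃ y : ∀ n, ℕ →₀ A n,
      (∀ n, (y (n + 1)).mapRange (f n) (map_zero _) = y n) ∧
      ¬ ∃ c : ℕ →₀ (∀ n, A n),
          (∀ k n, f n (c k (n + 1)) = c k n) ∧
          ∀ n, c.mapRange (fun x => x n) rfl = y n := by
  classical
  -- kernel elements
  have hker : ∀ k, ∃ a : A (k + 1), f k a = 0 ∧ a ≠ 0 := by
    intro k
    have h := hninj k
    rw [injective_iff_map_eq_zero (f k)] at h
    push_neg at h
    exact h
  choose a ha0 hane using hker
  -- sections of the surjections
  set g : ∀ n, A n → A (n + 1) := fun n => Function.surjInv (hsurj n) with hgdef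
  have hg : ∀ n x, f n (g n x) = x := fun n => Function.surjInv_eq (hsurj n)
  set t : ℕ → ∀ n, A n := fun k => chain g k (a k) with htdef
  -- compatibility of each chain
  have hcompat : ∀ k n, f n (t k (n + 1)) = t k n := by
    intro k n
    rcases lt_trichotomy n k with h | h | h
    · rw [htdef]
      simp only
      rw [chain_le g k (a k) (n + 1) (by omega), chain_le g k (a k) n (by omega),
        map_zero]
    · subst h
      rw [htdef]
      simp only
      rw [chain_succ_self, chain_le g n (a n) n le_rfl, ha0]
    · rw [htdef]
      simp only
      rw [chain_gt g k (a k) n h, hg]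
  have hzero : ∀ k n, n ≤ k → t k n = 0 := fun k n h => chain_le g k (a k) n h
  have hself : ∀ k, t k (k + 1) = a k := fun k => chain_succ_self g k (a k)
  -- the element of the inverse limit of direct sums
  refine ⟨fun n => Finsupp.onFinset (Finset.range n) (fun k => t k n)
    (fun k hk => by
      simp only [Finset.mem_range]
      by_contra hkn
      exact hk (hzero k n (by omega))), ?_, ?_⟩
  · intro n
    ext k
    simp [Finsupp.mapRange_apply, hcompat k n]
  · rintro ⟨c, -, hc⟩
    obtain ⟨k, hk⟩ := c.support.exists_notMem
    have h1 := DFunLike.congr_fun (hc (k + 1)) k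
    simp only [Finsupp.mapRange_apply, Finsupp.onFinset_apply] at h1
    rw [Finsupp.notMem_support_iff.mp hk] at h1
    rw [hself k] at h1
    exact hane k h1.symm
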